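/- Let Y be a b×a real matrix, U a c×b real matrix, and Z a c×a real matrix (the weights of a linear ResNetFree block r(x; U, Y, Z) = U Y x + Z x). Let B = [Y; Z] be the (b+c)×a matrix obtained by stacking Y on top of Z, and let A = [U Z] be the c×(b+a) matrix obtained by placing U to the left of Z. Then ‖B‖₂² ≥ (1/8)‖A‖₂² − ‖UᵀU − YYᵀ‖₂. In particular, switching between the two matrix representations A and B of the block preserves the largest singular value up to a multiplicative factor of 8 and an additive constant controlled by the Gram difference UᵀU − YYᵀ. -/

import Mathlib

open Matrix

/-- The spectral norm (largest singular value) of a real matrix: its operator norm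
as a linear map between Euclidean `ℓ²` spaces. -/
noncomputable def matrixSpectralNorm {m n : Type*} [Fintype m] [Fintype n] [DecidableEq n]
    (M : Matrix m n ℝ) : ℝ :=
  ‖LinearMap.toContinuousLinearMap (Matrix.toEuclideanLin M)‖

open scoped Matrix.Norms.L2Operator

lemma matrixSpectralNorm_eq_norm {m n : Type*} [Fintype m] [Fintype n] [DecidableEq n]
    (M : Matrix m n ℝ) : matrixSpectralNorm M = ‖M‖ := rfl

lemma matrixSpectralNorm_nonneg {m n : Type*} [Fintype m] [Fintype n] [DecidableEq n]
    (M : Matrix m n ℝ) : 0 ≤ matrixSpectralNorm M := norm_nonneg _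

-- pointwise norm-squared identity for fromRows
lemma fromRows_apply_norm_sq {a b c : ℕ} (Y : Matrix (Fin b) (Fin a) ℝ)
    (Z : Matrix (Fin c) (Fin a) ℝ) (x : EuclideanSpace ℝ (Fin a)) :
    ‖toEuclideanLin (fromRows Y Z) x‖ ^ 2
      = ‖toEuclideanLin Y x‖ ^ 2 + ‖toEuclideanLin Z x‖ ^ 2 := by
  simp only [EuclideanSpace.norm_eq]
  rw [Real.sq_sqrt (by positivity), Real.sq_sqrt (by positivity),
    Real.sq_sqrt (by positivity), Fintype.sum_sum_type]
  simp [toEuclideanLin_apply, fromRows_mulVec]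

lemma toCLM_apply {m n : Type*} [Fintype m] [Fintype n] [DecidableEq n] (M : Matrix m n ℝ)
    (x : EuclideanSpace ℝ n) :
    LinearMap.toContinuousLinearMap (Matrix.toEuclideanLin M) x = toEuclideanLin M x := rfl

lemma apply_le {m n : Type*} [Fintype m] [Fintype n] [DecidableEq n] (M : Matrix m n ℝ)
    (x : EuclideanSpace ℝ n) : ‖toEuclideanLin M x‖ ≤ matrixSpectralNorm M * ‖x‖ :=
  (LinearMap.toContinuousLinearMap (Matrix.toEuclideanLin M)).le_opNorm x

lemma spec_le_bound {m n : Type*} [Fintype m] [Fintype n] [DecidableEq n] (M : Matrix m n ℝ)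
    {C : ℝ} (hC : 0 ≤ C) (h : ∀ x : EuclideanSpace ℝ n, ‖toEuclideanLin M x‖ ≤ C * ‖x‖) :
    matrixSpectralNorm M ≤ C :=
  ContinuousLinearMap.opNorm_le_bound _ hC h

lemma left_le_fromRows {a b c : ℕ} (Y : Matrix (Fin b) (Fin a) ℝ)
    (Z : Matrix (Fin c) (Fin a) ℝ) :
    matrixSpectralNorm Y ≤ matrixSpectralNorm (fromRows Y Z) := by
  apply spec_le_bound _ (matrixSpectralNorm_nonneg _)
  intro x
  have h := fromRows_apply_norm_sq Y Z x
  have h2 := apply_le (fromRows Y Z) x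
  nlinarith [norm_nonneg (toEuclideanLin Y x), norm_nonneg (toEuclideanLin Z x),
    norm_nonneg (toEuclideanLin (fromRows Y Z) x), sq_nonneg (‖toEuclideanLin Z x‖)]

lemma right_le_fromRows {a b c : ℕ} (Y : Matrix (Fin b) (Fin a) ℝ)
    (Z : Matrix (Fin c) (Fin a) ℝ) :
    matrixSpectralNorm Z ≤ matrixSpectralNorm (fromRows Y Z) := by
  apply spec_le_bound _ (matrixSpectralNorm_nonneg _)
  intro x
  have h := fromRows_apply_norm_sq Y Z x
  have h2 := apply_le (fromRows Y Z) x
  nlinarith [norm_nonneg (toEuclideanLin Y x), norm_nonneg (toEuclideanLin Z x),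
    norm_nonneg (toEuclideanLin (fromRows Y Z) x)]

lemma fromRows_sq_le {a b c : ℕ} (Y : Matrix (Fin b) (Fin a) ℝ)
    (Z : Matrix (Fin c) (Fin a) ℝ) :
    matrixSpectralNorm (fromRows Y Z) ^ 2 ≤ matrixSpectralNorm Y ^ 2 + matrixSpectralNorm Z ^ 2 := by
  have key : matrixSpectralNorm (fromRows Y Z) ≤
      Real.sqrt (matrixSpectralNorm Y ^ 2 + matrixSpectralNorm Z ^ 2) := by
    apply spec_le_bound _ (Real.sqrt_nonneg _)
    intro x
    have h := fromRows_apply_norm_sq Y Z x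
    have hY := apply_le Y x
    have hZ := apply_le Z x
    have hx := norm_nonneg x
    have hsq : ‖toEuclideanLin (fromRows Y Z) x‖ ^ 2
        ≤ (Real.sqrt (matrixSpectralNorm Y ^ 2 + matrixSpectralNorm Z ^ 2) * ‖x‖) ^ 2 := by
      rw [mul_pow, Real.sq_sqrt (by positivity)]
      nlinarith [norm_nonneg (toEuclideanLin Y x), norm_nonneg (toEuclideanLin Z x),
        matrixSpectralNorm_nonneg Y, matrixSpectralNorm_nonneg Z]
    nlinarith [norm_nonneg (toEuclideanLin (fromRows Y Z) x),
      mul_nonneg (Real.sqrt_nonneg (matrixSpectralNorm Y ^ 2 + matrixSpectralNorm Z ^ 2)) hx]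
  calc matrixSpectralNorm (fromRows Y Z) ^ 2
      ≤ Real.sqrt (matrixSpectralNorm Y ^ 2 + matrixSpectralNorm Z ^ 2) ^ 2 := by
        apply pow_le_pow_left₀ (matrixSpectralNorm_nonneg _) key
    _ = matrixSpectralNorm Y ^ 2 + matrixSpectralNorm Z ^ 2 := Real.sq_sqrt (by positivity)

lemma spec_transpose {m n : Type*} [Fintype m] [Fintype n] [DecidableEq m] [DecidableEq n]
    (M : Matrix m n ℝ) : matrixSpectralNorm Mᵀ = matrixSpectralNorm M := by
  rw [matrixSpectralNorm_eq_norm, matrixSpectralNorm_eq_norm, ← conjTranspose_eq_transpose_of_trivial,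
    l2_opNorm_conjTranspose]

lemma spec_cstar {m n : Type*} [Fintype m] [Fintype n] [DecidableEq m] [DecidableEq n]
    (M : Matrix m n ℝ) : matrixSpectralNorm (Mᵀ * M) = matrixSpectralNorm M ^ 2 := by
  rw [matrixSpectralNorm_eq_norm, matrixSpectralNorm_eq_norm, ← conjTranspose_eq_transpose_of_trivial,
    l2_opNorm_conjTranspose_mul_self, sq]

/-- **Shuffling the layers of a linear ResNetFree block preserves the largest
singular value up to a factor 8.** With `B = [Y; Z]` (vertical stacking) and
`A = [U Z]` (horizontal concatenation), `‖B‖₂² ≥ (1/8)‖A‖₂² - ‖UᵀU - YYᵀ‖₂`. -/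
theorem resnetfree_representation_spectral_norm
    (a b c : ℕ)
    (Y : Matrix (Fin b) (Fin a) ℝ)
    (U : Matrix (Fin c) (Fin b) ℝ)
    (Z : Matrix (Fin c) (Fin a) ℝ) :
    matrixSpectralNorm (fromRows Y Z) ^ 2
      ≥ (1 / 8) * matrixSpectralNorm (fromCols U Z) ^ 2
          - matrixSpectralNorm (Uᵀ * U - Y * Yᵀ) := by
  set E := matrixSpectralNorm (Uᵀ * U - Y * Yᵀ) with hE
  -- ‖A‖ = ‖Aᵀ‖ = ‖fromRows Uᵀ Zᵀ‖
  have hA : matrixSpectralNorm (fromCols U Z) = matrixSpectralNorm (fromRows Uᵀ Zᵀ) := by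
    rw [← spec_transpose, transpose_fromCols]
  -- ‖A‖² ≤ ‖U‖² + ‖Z‖²
  have hA2 : matrixSpectralNorm (fromCols U Z) ^ 2 ≤ matrixSpectralNorm U ^ 2 + matrixSpectralNorm Z ^ 2 := by
    rw [hA]
    have := fromRows_sq_le Uᵀ Zᵀ
    rwa [spec_transpose, spec_transpose] at this
  -- ‖U‖² ≤ ‖Y‖² + E
  have hU : matrixSpectralNorm U ^ 2 ≤ matrixSpectralNorm Y ^ 2 + E := by
    have h1 : matrixSpectralNorm (Uᵀ * U) = matrixSpectralNorm U ^ 2 := spec_cstar U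
    have h2 : matrixSpectralNorm (Y * Yᵀ) = matrixSpectralNorm Y ^ 2 := by
      have := spec_cstar Yᵀ
      rwa [transpose_transpose, spec_transpose] at this
    have h3 : matrixSpectralNorm (Uᵀ * U) ≤ matrixSpectralNorm (Y * Yᵀ) + E := by
      rw [hE, matrixSpectralNorm_eq_norm, matrixSpectralNorm_eq_norm, matrixSpectralNorm_eq_norm]
      have := norm_sub_norm_le (Uᵀ * U) (Y * Yᵀ)
      linarith
    linarith [h1 ▸ h2 ▸ h3]
  have hY := left_le_fromRows Y Z
  have hZ := right_le_fromRows Y Z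
  have hY2 : matrixSpectralNorm Y ^ 2 ≤ matrixSpectralNorm (fromRows Y Z) ^ 2 :=
    pow_le_pow_left₀ (matrixSpectralNorm_nonneg _) hY 2
  have hZ2 : matrixSpectralNorm Z ^ 2 ≤ matrixSpectralNorm (fromRows Y Z) ^ 2 :=
    pow_le_pow_left₀ (matrixSpectralNorm_nonneg _) hZ 2
  have hE0 : 0 ≤ E := matrixSpectralNorm_nonneg _
  nlinarith [sq_nonneg (matrixSpectralNorm (fromCols U Z))]
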